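/- Let α ∈ (0,1) and let χ_{m−2}(1−α) denote the (1−α)-quantile of the (central) chi-square distribution with m−2 degrees of freedom. Define the asymptotic level α̂(γ,Π) = 1 − F_{m−2}(χ_{m−2}(1−α), λ̂²(γ,Π)), so that α̂(0,Π) = α. Then sup_Π |α̂(γ,Π) − α| → 0 as γ → 0, where the supremum is over all probability distributions Π on ℝ. (Qualitative robustness relation (2.10).) -/

import Mathlib

open MeasureTheory

/-- Standard normal cumulative distribution function `Φ`. -/
noncomputable def stdNormalCDF (x : ℝ) : ℝ :=
  (ProbabilityTheory.gaussianReal 0 1 (Set.Iic x)).toReal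

/-- Drift `Δ(x, Π) = ∑_{j=0}^p [∫ G(x + β_j s) dΠ(s) − G(x)]` (with `β 0 = -1`). -/
noncomputable def drift (p : ℕ) (β : Fin (p + 1) → ℝ) (G : ℝ → ℝ)
    (Pim : Measure ℝ) (x : ℝ) : ℝ :=
  ∑ j : Fin (p + 1), ((∫ s, G (x + β j * s) ∂Pim) - G x)

/-- Symmetrized drift `Δ_S(x, Π) = (Δ(x,Π) − Δ(−x,Π))/2`. -/
noncomputable def driftS (p : ℕ) (β : Fin (p + 1) → ℝ) (G : ℝ → ℝ)
    (Pim : Measure ℝ) (x : ℝ) : ℝ :=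
  (drift p β G Pim x - drift p β G Pim (-x)) / 2

/-- Cell probabilities under the Gaussian null: `p_j(θ) = 2(Φ(x_j/θ) − Φ(x_{j-1}/θ))`
for `1 ≤ j ≤ m-1`, and `p_m(θ) = 2(1 − Φ(x_{m-1}/θ))` (since `x_m = ∞`). -/
noncomputable def cellProb (m : ℕ) (x : ℕ → ℝ) (j : ℕ) (θ : ℝ) : ℝ :=
  if j < m then 2 * (stdNormalCDF (x j / θ) - stdNormalCDF (x (j - 1) / θ))
  else 2 * (1 - stdNormalCDF (x (m - 1) / θ))

/-- Components of the shift vector: `δ_j(Π) = 2[Δ_S(x_j,Π) − Δ_S(x_{j-1},Π)]` for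
`j < m`, and `δ_m(Π) = −2 Δ_S(x_{m-1},Π)` (as `Δ_S(x_m,Π) = lim_{x→∞} Δ_S(x,Π) = 0`),
computed with `G(x) = Φ(x/θ₀)`. -/
noncomputable def shiftComp (p : ℕ) (β : Fin (p + 1) → ℝ) (θ₀ : ℝ)
    (m : ℕ) (x : ℕ → ℝ) (Pim : Measure ℝ) (j : ℕ) : ℝ :=
  let G : ℝ → ℝ := fun y => stdNormalCDF (y / θ₀)
  if j < m then 2 * (driftS p β G Pim (x j) - driftS p β G Pim (x (j - 1)))
  else -(2 * driftS p β G Pim (x (m - 1)))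

/-- The noncentrality parameter
`λ̂²(γ,Π) = γ² |(E_m − α(θ₀)α(θ₀)ᵀ) P^{−1/2}(θ₀) δ(Π)|²`, written coordinatewise:
`b(θ₀) = P^{-1/2}(θ₀) p'(θ₀)`, `α = b/|b|`, `d = P^{-1/2}(θ₀) δ(Π)`, and the
projection `d - ⟨α, d⟩ α`. -/
noncomputable def lambdaHatSq (p : ℕ) (β : Fin (p + 1) → ℝ) (θ₀ : ℝ)
    (m : ℕ) (x : ℕ → ℝ) (γ : ℝ) (Pim : Measure ℝ) : ℝ :=
  let pj : ℕ → ℝ := fun j => cellProb m x j θ₀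
  let p' : ℕ → ℝ := fun j => deriv (fun θ => cellProb m x j θ) θ₀
  let b : ℕ → ℝ := fun j => p' j / Real.sqrt (pj j)
  let nb : ℝ := Real.sqrt (∑ j ∈ Finset.Icc 1 m, b j ^ 2)
  let a : ℕ → ℝ := fun j => b j / nb
  let d : ℕ → ℝ := fun j => shiftComp p β θ₀ m x Pim j / Real.sqrt (pj j)
  γ ^ 2 * ∑ j ∈ Finset.Icc 1 m,
    (d j - (∑ i ∈ Finset.Icc 1 m, a i * d i) * a j) ^ 2

/-- Noncentral chi-square c.d.f. `F_k(c, λ²)`: the c.d.f. of `‖Z + e‖²` where `Z` is a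
standard Gaussian vector in `ℝ^k` and `e` is any vector with `‖e‖² = λ²`
(here `e = (√λ², 0, …, 0)`). -/
noncomputable def noncentralChiSqCDF (k : ℕ) (c : ℝ) (l : ℝ) : ℝ :=
  ((Measure.pi fun _ : Fin k => ProbabilityTheory.gaussianReal 0 1)
    {v | ∑ i, (v i + (if (i : ℕ) = 0 then Real.sqrt l else 0)) ^ 2 ≤ c}).toReal

/-- `q`-quantile of the central chi-square distribution with `k` degrees of freedom. -/
noncomputable def chiSqQuantile (k : ℕ) (q : ℝ) : ℝ :=
  sInf {c : ℝ | q ≤ noncentralChiSqCDF k c 0}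


section AuxProofs
open ProbabilityTheory Set Filter Topology



lemma gaussReal_singleton (y : ℝ) : gaussianReal 0 1 {y} = 0 :=
  gaussianReal_absolutelyContinuous 0 one_ne_zero (Real.volume_singleton)

lemma gaussReal_pair (y z : ℝ) : gaussianReal 0 1 ({y, z} : Set ℝ) = 0 := by
  rw [Set.insert_eq]
  exact measure_union_null (gaussReal_singleton _) (gaussReal_singleton _)

lemma gaussPi_sphere_null (k : ℕ) (a : Fin (k + 1) → ℝ) (c : ℝ) :
    Measure.pi (fun _ : Fin (k + 1) => gaussianReal 0 1)
      {v : Fin (k + 1) → ℝ | ∑ i, (v i + a i) ^ 2 = c} = 0 := by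
  set e := MeasurableEquiv.piFinSuccAbove (fun _ : Fin (k + 1) => ℝ) 0 with he
  have hmp := measurePreserving_piFinSuccAbove (fun _ : Fin (k + 1) => gaussianReal 0 1) 0
  set T : Set (ℝ × (Fin k → ℝ)) :=
    {q | (q.1 + a 0) ^ 2 + ∑ j : Fin k, (q.2 j + a ((0 : Fin (k+1)).succAbove j)) ^ 2 = c}
    with hT
  have hTc : Continuous fun q : ℝ × (Fin k → ℝ) =>
      (q.1 + a 0) ^ 2 + ∑ j : Fin k, (q.2 j + a ((0 : Fin (k+1)).succAbove j)) ^ 2 := by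
    apply Continuous.add
    · exact (continuous_fst.add continuous_const).pow 2
    · exact continuous_finset_sum _ fun j _ =>
        (((continuous_apply j).comp continuous_snd).add continuous_const).pow 2
  have hTmeas : MeasurableSet T := hTc.measurable (measurableSet_singleton c)
  have hpre : e ⁻¹' T = {v : Fin (k + 1) → ℝ | ∑ i, (v i + a i) ^ 2 = c} := by
    ext v
    simp only [mem_preimage, hT, mem_setOf_eq, he, MeasurableEquiv.piFinSuccAbove_apply]
    rw [Fin.sum_univ_succ]
    simp [Fin.succAbove_zero, Fin.tail]
  have key : ((gaussianReal 0 1).prod (Measure.pi fun _ : Fin k => gaussianReal 0 1)) T = 0 := by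
    rw [Measure.prod_apply_symm hTmeas]
    have : ∀ w : Fin k → ℝ, gaussianReal 0 1 ((fun t => (t, w)) ⁻¹' T) = 0 := by
      intro w
      set R := ∑ j : Fin k, (w j + a ((0 : Fin (k+1)).succAbove j)) ^ 2 with hR
      have hsub : ((fun t => (t, w)) ⁻¹' T) ⊆
          {Real.sqrt (c - R) - a 0, -Real.sqrt (c - R) - a 0} := by
        intro t ht
        simp only [mem_preimage, hT, mem_setOf_eq] at ht
        have h1 : (t + a 0) ^ 2 = c - R := by rw [hR]; linarith
        have h2 : |t + a 0| = Real.sqrt (c - R) := by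
          rw [← h1, Real.sqrt_sq_eq_abs]
        simp only [mem_insert_iff, mem_singleton_iff]
        rcases abs_eq (abs_nonneg (t + a 0) |>.trans h2.le) |>.1 h2 with h3 | h3
        · left; linarith
        · right; linarith
      exact measure_mono_null hsub (gaussReal_pair _ _)
    simp [this]
  calc Measure.pi (fun _ : Fin (k + 1) => gaussianReal 0 1)
        {v : Fin (k + 1) → ℝ | ∑ i, (v i + a i) ^ 2 = c}
      = Measure.pi (fun _ : Fin (k + 1) => gaussianReal 0 1) (e ⁻¹' T) := by rw [hpre]
    _ = ((gaussianReal 0 1).prod (Measure.pi fun _ : Fin k => gaussianReal 0 1)) T :=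
        hmp.measure_preimage hTmeas.nullMeasurableSet
    _ = 0 := key


lemma cdf_continuousAt_of_no_atom {ρ : Measure ℝ} [IsProbabilityMeasure ρ] {c : ℝ}
    (h : ρ {c} = 0) : ContinuousAt (fun t => (ρ (Iic t)).toReal) c := by
  have hfun : (fun t => (ρ (Iic t)).toReal) = ⇑(cdf ρ) := by
    ext t; rw [cdf_eq_real, measureReal_def]
  rw [hfun]
  have hsing := (cdf ρ).measure_singleton c
  rw [measure_cdf, h] at hsing
  have hle : Function.leftLim (⇑(cdf ρ)) c ≤ cdf ρ c := (monotone_cdf ρ).leftLim_le le_rfl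
  have heq : Function.leftLim (⇑(cdf ρ)) c = cdf ρ c := by
    by_contra h3
    have h4 : (0:ℝ) < cdf ρ c - Function.leftLim (⇑(cdf ρ)) c := by
      rcases lt_or_eq_of_le hle with h5 | h5
      · linarith
      · exact absurd h5 h3
    exact (ENNReal.ofReal_pos.2 h4).ne' hsing.symm
  exact (monotone_cdf ρ).continuousAt_iff_leftLim_eq_rightLim.2
    (heq.trans ((cdf ρ).rightLim_eq c).symm)

lemma sqrt_sum_sq_triangle {k : ℕ} (u w : Fin k → ℝ) :
    Real.sqrt (∑ i, (u i + w i) ^ 2) ≤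
      Real.sqrt (∑ i, (u i) ^ 2) + Real.sqrt (∑ i, (w i) ^ 2) := by
  have h : ∀ z : Fin k → ℝ,
      Real.sqrt (∑ i, (z i) ^ 2) = ‖(WithLp.equiv 2 (Fin k → ℝ)).symm z‖ := by
    intro z
    rw [EuclideanSpace.norm_eq]
    congr 1
    refine Finset.sum_congr rfl fun i _ => ?_
    rw [WithLp.equiv_symm_apply, PiLp.toLp_apply, Real.norm_eq_abs, sq_abs]
  have key := norm_add_le ((WithLp.equiv 2 (Fin k → ℝ)).symm u)
    ((WithLp.equiv 2 (Fin k → ℝ)).symm w)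
  rw [← h, ← h] at key
  have h2 : Real.sqrt (∑ i, (u i + w i) ^ 2) =
      ‖(WithLp.equiv 2 (Fin k → ℝ)).symm u + (WithLp.equiv 2 (Fin k → ℝ)).symm w‖ := by
    rw [EuclideanSpace.norm_eq]
    congr 1
    refine Finset.sum_congr rfl fun i _ => ?_
    rw [PiLp.add_apply, WithLp.equiv_symm_apply, PiLp.toLp_apply, PiLp.toLp_apply,
      Real.norm_eq_abs, sq_abs]
  rw [h2]; exact key

-- helper lemmas
lemma stdNormalCDF_mem : ∀ y, 0 ≤ stdNormalCDF y ∧ stdNormalCDF y ≤ 1 := by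
  intro y
  refine ⟨ENNReal.toReal_nonneg, ?_⟩
  have h := prob_le_one (μ := gaussianReal 0 1) (s := Set.Iic y)
  have := ENNReal.toReal_mono ENNReal.one_ne_top h
  simpa [stdNormalCDF] using this

lemma abs_integral_le_one {Pim : Measure ℝ} [IsProbabilityMeasure Pim] {f : ℝ → ℝ}
    (hf : ∀ t, |f t| ≤ 1) : |∫ s, f s ∂Pim| ≤ 1 := by
  have h := norm_integral_le_of_norm_le_const (μ := Pim) (f := f) (C := 1)
    (Eventually.of_forall fun t => by simpa using hf t)
  simpa using h

lemma abs_drift_le (p : ℕ) (β : Fin (p + 1) → ℝ) (G : ℝ → ℝ)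
    (Pim : Measure ℝ) [IsProbabilityMeasure Pim]
    (hG : ∀ t, 0 ≤ G t ∧ G t ≤ 1) (y : ℝ) :
    |drift p β G Pim y| ≤ 2 * (p + 1) := by
  unfold drift
  calc |∑ j : Fin (p+1), ((∫ s, G (y + β j * s) ∂Pim) - G y)|
      ≤ ∑ j : Fin (p+1), |(∫ s, G (y + β j * s) ∂Pim) - G y| :=
        Finset.abs_sum_le_sum_abs _ _
    _ ≤ ∑ _j : Fin (p+1), (2:ℝ) := by
        refine Finset.sum_le_sum fun j _ => ?_
        have h1 : |∫ s, G (y + β j * s) ∂Pim| ≤ 1 :=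
          abs_integral_le_one fun t => abs_le.2 ⟨by linarith [(hG (y + β j * t)).1],
            (hG (y + β j * t)).2⟩
        have h2 : |G y| ≤ 1 := abs_le.2 ⟨by linarith [(hG y).1], (hG y).2⟩
        calc |(∫ s, G (y + β j * s) ∂Pim) - G y|
            ≤ |∫ s, G (y + β j * s) ∂Pim| + |G y| := abs_sub _ _
          _ ≤ 2 := by linarith
    _ = 2 * (p + 1) := by
        rw [Finset.sum_const, Finset.card_univ, Fintype.card_fin]
        ring

lemma abs_driftS_le (p : ℕ) (β : Fin (p + 1) → ℝ) (G : ℝ → ℝ)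
    (Pim : Measure ℝ) [IsProbabilityMeasure Pim]
    (hG : ∀ t, 0 ≤ G t ∧ G t ≤ 1) (y : ℝ) :
    |driftS p β G Pim y| ≤ 2 * (p + 1) := by
  unfold driftS
  rw [abs_div]
  have h1 := abs_drift_le p β G Pim hG y
  have h2 := abs_drift_le p β G Pim hG (-y)
  have h3 := abs_sub (drift p β G Pim y) (drift p β G Pim (-y))
  rw [abs_two]
  linarith

lemma abs_shiftComp_le (p : ℕ) (β : Fin (p + 1) → ℝ) (θ₀ : ℝ) (m : ℕ) (x : ℕ → ℝ)
    (Pim : Measure ℝ) [IsProbabilityMeasure Pim] (j : ℕ) :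
    |shiftComp p β θ₀ m x Pim j| ≤ 8 * (p + 1) := by
  have hG : ∀ t : ℝ, 0 ≤ stdNormalCDF (t / θ₀) ∧ stdNormalCDF (t / θ₀) ≤ 1 :=
    fun t => stdNormalCDF_mem _
  unfold shiftComp
  have hp1 : (0:ℝ) ≤ (p:ℝ) + 1 := by positivity
  split_ifs with h
  · have h1 := abs_driftS_le p β (fun y => stdNormalCDF (y / θ₀)) Pim hG (x j)
    have h2 := abs_driftS_le p β (fun y => stdNormalCDF (y / θ₀)) Pim hG (x (j - 1))
    have h3 := abs_sub (driftS p β (fun y => stdNormalCDF (y / θ₀)) Pim (x j))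
      (driftS p β (fun y => stdNormalCDF (y / θ₀)) Pim (x (j - 1)))
    rw [abs_mul, abs_two]
    linarith
  · have h1 := abs_driftS_le p β (fun y => stdNormalCDF (y / θ₀)) Pim hG (x (m - 1))
    rw [abs_neg, abs_mul, abs_two]
    linarith

lemma abs_div_le_div {u K s : ℝ} (hu : |u| ≤ K) (hs : 0 ≤ s) : |u / s| ≤ K / s := by
  rcases hs.eq_or_lt with h | h
  · simp [← h]
  · rw [abs_div, abs_of_pos h]
    gcongr


lemma proj_term_bound (F : Finset ℕ) (dv a Dv : ℕ → ℝ)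
    (hDv : ∀ j, 0 ≤ Dv j)
    (hd : ∀ j ∈ F, |dv j| ≤ Dv j) :
    ∑ j ∈ F, (dv j - (∑ i ∈ F, a i * dv i) * a j) ^ 2
      ≤ ∑ j ∈ F, (Dv j + (∑ i ∈ F, |a i| * Dv i) * |a j|) ^ 2 := by
  have hS : |∑ i ∈ F, a i * dv i| ≤ ∑ i ∈ F, |a i| * Dv i := by
    calc |∑ i ∈ F, a i * dv i| ≤ ∑ i ∈ F, |a i * dv i| := Finset.abs_sum_le_sum_abs _ _
      _ ≤ ∑ i ∈ F, |a i| * Dv i := by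
          refine Finset.sum_le_sum fun i hi => ?_
          rw [abs_mul]
          exact mul_le_mul_of_nonneg_left (hd i hi) (abs_nonneg _)
  refine Finset.sum_le_sum fun j hj => ?_
  have h1 : |dv j - (∑ i ∈ F, a i * dv i) * a j|
      ≤ Dv j + (∑ i ∈ F, |a i| * Dv i) * |a j| := by
    calc |dv j - (∑ i ∈ F, a i * dv i) * a j|
        ≤ |dv j| + |(∑ i ∈ F, a i * dv i) * a j| := abs_sub _ _
      _ ≤ Dv j + (∑ i ∈ F, |a i| * Dv i) * |a j| := by
          rw [abs_mul]
          exact add_le_add (hd j hj) (mul_le_mul_of_nonneg_right hS (abs_nonneg _))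
  calc (dv j - (∑ i ∈ F, a i * dv i) * a j) ^ 2
      = |dv j - (∑ i ∈ F, a i * dv i) * a j| ^ 2 := (sq_abs _).symm
    _ ≤ (Dv j + (∑ i ∈ F, |a i| * Dv i) * |a j|) ^ 2 :=
        pow_le_pow_left₀ (abs_nonneg _) h1 2


lemma sq_add_le_sq_add {A B C : ℝ} (hA : 0 ≤ A) (hB : 0 ≤ B) (h : B ≤ C) :
    (A + B) ^ 2 ≤ (A + C) ^ 2 := by nlinarith

lemma sq_sub_le_sq_sub {A B C : ℝ} (hB : 0 ≤ B) (h : B ≤ C) (hCA : C ≤ A) :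
    (A - C) ^ 2 ≤ (A - B) ^ 2 := by nlinarith

lemma sq_sub_le_self {A C : ℝ} (hC : 0 ≤ C) (hCA : C ≤ A) : (A - C) ^ 2 ≤ A ^ 2 := by nlinarith

lemma self_le_sq_add {A C : ℝ} (hA : 0 ≤ A) (hC : 0 ≤ C) : A ^ 2 ≤ (A + C) ^ 2 := by nlinarith

theorem aux_asymptotic_level_qualitative_robustness
    (p : ℕ) (β : Fin (p + 1) → ℝ) (hβ0 : β 0 = -1)
    (θ₀ : ℝ) (hθ₀ : 0 < θ₀)
    (m : ℕ) (hm : 2 < m)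
    (x : ℕ → ℝ) (hx0 : x 0 = 0) (hxmono : ∀ i, i + 1 < m → x i < x (i + 1))
    (α : ℝ) (hα : α ∈ Set.Ioo (0 : ℝ) 1) :
    (∀ (Pim : Measure ℝ), IsProbabilityMeasure Pim →
      1 - noncentralChiSqCDF (m - 2) (chiSqQuantile (m - 2) (1 - α))
          (lambdaHatSq p β θ₀ m x 0 Pim) = α) ∧
    Filter.Tendsto
      (fun γ : ℝ => ⨆ Pim : {μ : Measure ℝ // IsProbabilityMeasure μ},
        |(1 - noncentralChiSqCDF (m - 2) (chiSqQuantile (m - 2) (1 - α))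
            (lambdaHatSq p β θ₀ m x γ (Pim : Measure ℝ))) - α|)
      (nhdsWithin 0 (Set.Ici 0)) (nhds 0) := by
  obtain ⟨hα0, hα1⟩ := hα
  obtain ⟨k, hk⟩ : ∃ k, m - 2 = k + 1 := ⟨m - 3, by omega⟩
  rw [hk]
  set ν : Measure (Fin (k + 1) → ℝ) := Measure.pi fun _ => gaussianReal 0 1 with hν
  haveI : IsProbabilityMeasure ν := by rw [hν]; infer_instance
  have hfc : Continuous fun v : Fin (k + 1) → ℝ => ∑ i, (v i) ^ 2 :=
    continuous_finset_sum _ fun i _ => (continuous_apply i).pow 2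
  set ρ : Measure ℝ := ν.map (fun v => ∑ i, (v i) ^ 2) with hρ
  haveI hρprob : IsProbabilityMeasure ρ := Measure.isProbabilityMeasure_map hfc.measurable.aemeasurable
  set G : ℝ → ℝ := fun c => noncentralChiSqCDF (k + 1) c 0 with hG
  have hGset : ∀ c, G c = (ν {v | ∑ i, (v i) ^ 2 ≤ c}).toReal := by
    intro c
    simp only [hG, noncentralChiSqCDF, Real.sqrt_zero, ite_self, add_zero, ← hν]
  have hGρ : ∀ c, G c = (ρ (Iic c)).toReal := by
    intro c
    rw [hGset, hρ, Measure.map_apply hfc.measurable measurableSet_Iic]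
    rfl
  have hsphere : ∀ c, ν {v : Fin (k + 1) → ℝ | ∑ i, (v i) ^ 2 = c} = 0 := by
    intro c
    have h0 := gaussPi_sphere_null k (fun _ => 0) c
    simp only [add_zero] at h0
    rw [← hν] at h0
    exact h0
  have hatom : ∀ c, ρ {c} = 0 := by
    intro c
    rw [hρ, Measure.map_apply hfc.measurable (measurableSet_singleton c)]
    have : (fun v : Fin (k + 1) → ℝ => ∑ i, (v i) ^ 2) ⁻¹' {c}
        = {v : Fin (k + 1) → ℝ | ∑ i, (v i) ^ 2 = c} := by ext v; simp
    rw [this]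
    exact hsphere c
  have hGcont : Continuous G := by
    rw [continuous_iff_continuousAt]
    intro c
    have h := cdf_continuousAt_of_no_atom (hatom c)
    have hfe : (fun t => (ρ (Iic t)).toReal) = G := by ext t; rw [hGρ]
    rwa [hfe] at h
  have hGmono : Monotone G := fun s t hst => by
    rw [hGρ, hGρ]
    exact ENNReal.toReal_mono (measure_ne_top ρ _) (measure_mono (Iic_subset_Iic.2 hst))
  have hG0 : G 0 = 0 := by
    rw [hGset]
    have h0 : ν {v : Fin (k + 1) → ℝ | ∑ i, (v i) ^ 2 ≤ 0} = 0 := by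
      refine measure_mono_null (fun v hv => ?_) (hsphere 0)
      simp only [mem_setOf_eq] at hv ⊢
      exact le_antisymm hv (Finset.sum_nonneg fun i _ => sq_nonneg _)
    simp [h0]
  have hGtop : Tendsto G atTop (𝓝 1) := by
    have hfe : G = ⇑(cdf ρ) := by ext t; rw [hGρ, cdf_eq_real, measureReal_def]
    rw [hfe]
    exact tendsto_cdf_atTop ρ
  -- quantile analysis
  set S : Set ℝ := {c | 1 - α ≤ G c} with hSdef
  have hq : chiSqQuantile (k + 1) (1 - α) = sInf S := rfl
  set q : ℝ := sInf S with hqdef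
  have hSne : S.Nonempty := (hGtop.eventually (eventually_ge_nhds (show 1 - α < 1 by linarith))).exists
  have hSbdd : BddBelow S := by
    refine ⟨0, fun c hc => ?_⟩
    by_contra hneg
    push_neg at hneg
    have h1 : G c ≤ G 0 := hGmono hneg.le
    rw [hG0] at h1
    have h2 : 1 - α ≤ G c := hc
    linarith
  have hScl : IsClosed S := isClosed_le continuous_const hGcont
  have hqS : q ∈ S := hScl.csInf_mem hSne hSbdd
  have hGq_le : G q ≤ 1 - α := by
    have hten : Tendsto G (𝓝[<] q) (𝓝 (G q)) :=
      (hGcont.continuousAt (x := q)).continuousWithinAt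
    refine le_of_tendsto hten ?_
    filter_upwards [self_mem_nhdsWithin] with c hc
    by_contra hgt
    push_neg at hgt
    exact absurd (csInf_le hSbdd (le_of_lt hgt)) (not_le.2 hc)
  have hGqeq : G q = 1 - α := le_antisymm hGq_le hqS
  have hqpos : 0 < q := by
    by_contra hle
    push_neg at hle
    have h1 : G q ≤ G 0 := hGmono hle
    rw [hG0, hGqeq] at h1
    linarith
  -- sandwich inequalities
  have hsand : ∀ l : ℝ, 0 ≤ l → Real.sqrt l ≤ Real.sqrt q →
      G ((Real.sqrt q - Real.sqrt l) ^ 2) ≤ noncentralChiSqCDF (k + 1) q l ∧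
      noncentralChiSqCDF (k + 1) q l ≤ G ((Real.sqrt q + Real.sqrt l) ^ 2) := by
    intro l hl hlq
    set a : Fin (k + 1) → ℝ := fun i => if (i : ℕ) = 0 then Real.sqrt l else 0 with ha
    have hF : noncentralChiSqCDF (k + 1) q l
        = (ν {v | ∑ i, (v i + a i) ^ 2 ≤ q}).toReal := by
      simp only [noncentralChiSqCDF, ← hν, ha]
    have ha2 : ∑ i, (a i) ^ 2 = l := by
      rw [ha, Fin.sum_univ_succ]
      simp [Real.sq_sqrt hl]
    constructor
    · rw [hF, hGset]
      refine ENNReal.toReal_mono (measure_ne_top ν _) (measure_mono fun v hv => ?_)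
      simp only [mem_setOf_eq] at hv ⊢
      have hnn : (0:ℝ) ≤ Real.sqrt q - Real.sqrt l := sub_nonneg.2 hlq
      have h1 : Real.sqrt (∑ i, (v i) ^ 2) ≤ Real.sqrt q - Real.sqrt l := by
        have h := Real.sqrt_le_sqrt hv
        rwa [Real.sqrt_sq hnn] at h
      have h2 : Real.sqrt (∑ i, (v i + a i) ^ 2) ≤ Real.sqrt q := by
        have htri := sqrt_sum_sq_triangle v a
        rw [ha2] at htri
        linarith
      calc ∑ i, (v i + a i) ^ 2
          = Real.sqrt (∑ i, (v i + a i) ^ 2) ^ 2 :=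
            (Real.sq_sqrt (Finset.sum_nonneg fun i _ => sq_nonneg _)).symm
        _ ≤ Real.sqrt q ^ 2 := pow_le_pow_left₀ (Real.sqrt_nonneg _) h2 2
        _ = q := Real.sq_sqrt hqpos.le
    · rw [hF, hGset]
      refine ENNReal.toReal_mono (measure_ne_top ν _) (measure_mono fun v hv => ?_)
      simp only [mem_setOf_eq] at hv ⊢
      have h2 : Real.sqrt (∑ i, (v i + a i) ^ 2) ≤ Real.sqrt q := Real.sqrt_le_sqrt hv
      have h3 : Real.sqrt (∑ i, (v i) ^ 2) ≤ Real.sqrt q + Real.sqrt l := by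
        have htri := sqrt_sum_sq_triangle (fun i => v i + a i) (fun i => -(a i))
        simp only [add_neg_cancel_right, neg_sq] at htri
        rw [ha2] at htri
        linarith
      calc ∑ i, (v i) ^ 2
          = Real.sqrt (∑ i, (v i) ^ 2) ^ 2 :=
            (Real.sq_sqrt (Finset.sum_nonneg fun i _ => sq_nonneg _)).symm
        _ ≤ (Real.sqrt q + Real.sqrt l) ^ 2 := pow_le_pow_left₀ (Real.sqrt_nonneg _) h3 2
  -- uniform bound on the noncentrality parameter
  set Dv : ℕ → ℝ := fun j => (8 * ((p:ℝ) + 1)) / Real.sqrt (cellProb m x j θ₀) with hDvdef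
  set av : ℕ → ℝ := fun j =>
    (deriv (fun θ => cellProb m x j θ) θ₀ / Real.sqrt (cellProb m x j θ₀)) /
      Real.sqrt (∑ i ∈ Finset.Icc 1 m,
        (deriv (fun θ => cellProb m x i θ) θ₀ / Real.sqrt (cellProb m x i θ₀)) ^ 2) with havdef
  set D : ℝ := ∑ j ∈ Finset.Icc 1 m,
      (Dv j + (∑ i ∈ Finset.Icc 1 m, |av i| * Dv i) * |av j|) ^ 2 with hDdef
  have hD0 : 0 ≤ D := Finset.sum_nonneg fun _ _ => sq_nonneg _
  have hlam : ∀ (Pim : Measure ℝ), IsProbabilityMeasure Pim → ∀ γ : ℝ,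
      0 ≤ lambdaHatSq p β θ₀ m x γ Pim ∧ lambdaHatSq p β θ₀ m x γ Pim ≤ γ ^ 2 * D := by
    intro Pim hP γ
    haveI := hP
    constructor
    · simp only [lambdaHatSq]
      positivity
    · simp only [lambdaHatSq, hDdef]
      refine mul_le_mul_of_nonneg_left ?_ (sq_nonneg γ)
      exact proj_term_bound (Finset.Icc 1 m)
        (fun j => shiftComp p β θ₀ m x Pim j / Real.sqrt (cellProb m x j θ₀)) av Dv
        (fun j => div_nonneg (by positivity) (Real.sqrt_nonneg _))
        (fun j _ => abs_div_le_div (abs_shiftComp_le p β θ₀ m x Pim j) (Real.sqrt_nonneg _))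
  have hqq : chiSqQuantile (k + 1) (1 - α) = q := rfl
  haveI hne : Nonempty {μ : Measure ℝ // IsProbabilityMeasure μ} :=
    ⟨⟨Measure.dirac 0, inferInstance⟩⟩
  constructor
  · intro Pim hP
    have h0 : lambdaHatSq p β θ₀ m x 0 Pim = 0 := by simp [lambdaHatSq]
    rw [h0, hqq]
    have hFq : noncentralChiSqCDF (k + 1) q 0 = G q := rfl
    rw [hFq, hGqeq]
    ring
  · set H : ℝ → ℝ := fun γ => G ((Real.sqrt q + Real.sqrt (γ ^ 2 * D)) ^ 2)
      - G ((Real.sqrt q - Real.sqrt (γ ^ 2 * D)) ^ 2) with hH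
    have hc1 : Continuous fun γ : ℝ => Real.sqrt (γ ^ 2 * D) :=
      Real.continuous_sqrt.comp ((continuous_pow 2).mul continuous_const)
    have hHcont : Continuous H := by
      rw [hH]
      exact (hGcont.comp ((continuous_const.add hc1).pow 2)).sub
        (hGcont.comp ((continuous_const.sub hc1).pow 2))
    have hH0 : H 0 = 0 := by
      simp [hH]
    have hHt : Tendsto H (𝓝[≥] (0:ℝ)) (𝓝 0) := by
      have h := hHcont.tendsto 0
      rw [hH0] at h
      exact h.mono_left nhdsWithin_le_nhds
    have hupper : ∀ᶠ γ in 𝓝[≥] (0:ℝ),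
        (⨆ Pim : {μ : Measure ℝ // IsProbabilityMeasure μ},
          |(1 - noncentralChiSqCDF (k + 1) (chiSqQuantile (k + 1) (1 - α))
              (lambdaHatSq p β θ₀ m x γ (Pim : Measure ℝ))) - α|) ≤ H γ := by
      have hev : ∀ᶠ γ in 𝓝[≥] (0:ℝ), γ ^ 2 * D ≤ q := by
        have ht : Tendsto (fun γ : ℝ => γ ^ 2 * D) (𝓝[≥] (0:ℝ)) (𝓝 0) := by
          have h := ((continuous_pow 2).mul (continuous_const (y := D))).tendsto (0:ℝ)
          norm_num at h
          exact h.mono_left nhdsWithin_le_nhds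
        exact (ht.eventually_lt_const hqpos).mono fun γ h => h.le
      filter_upwards [hev] with γ hγ
      refine ciSup_le fun Pim => ?_
      haveI := Pim.2
      obtain ⟨hl0, hlD⟩ := hlam Pim.1 Pim.2 γ
      have hsl : Real.sqrt (lambdaHatSq p β θ₀ m x γ Pim.1) ≤ Real.sqrt (γ ^ 2 * D) :=
        Real.sqrt_le_sqrt hlD
      have hqγ : Real.sqrt (γ ^ 2 * D) ≤ Real.sqrt q := Real.sqrt_le_sqrt hγ
      obtain ⟨hlo, hhi⟩ := hsand (lambdaHatSq p β θ₀ m x γ Pim.1) hl0 (hsl.trans hqγ)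
      have e1 : G q ≤ G ((Real.sqrt q + Real.sqrt (γ ^ 2 * D)) ^ 2) := by
        have h := hGmono (self_le_sq_add (Real.sqrt_nonneg q) (Real.sqrt_nonneg (γ ^ 2 * D)))
        rwa [Real.sq_sqrt hqpos.le] at h
      have e2 : G ((Real.sqrt q - Real.sqrt (γ ^ 2 * D)) ^ 2)
          ≤ G ((Real.sqrt q - Real.sqrt (lambdaHatSq p β θ₀ m x γ Pim.1)) ^ 2) :=
        hGmono (sq_sub_le_sq_sub (Real.sqrt_nonneg _) hsl hqγ)
      have e3 : G ((Real.sqrt q + Real.sqrt (lambdaHatSq p β θ₀ m x γ Pim.1)) ^ 2)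
          ≤ G ((Real.sqrt q + Real.sqrt (γ ^ 2 * D)) ^ 2) :=
        hGmono (sq_add_le_sq_add (Real.sqrt_nonneg q) (Real.sqrt_nonneg _) hsl)
      have e4 : G ((Real.sqrt q - Real.sqrt (γ ^ 2 * D)) ^ 2) ≤ G q := by
        have h := hGmono (sq_sub_le_self (Real.sqrt_nonneg (γ ^ 2 * D)) hqγ)
        rwa [Real.sq_sqrt hqpos.le] at h
      rw [hqq]
      simp only [hH]
      rw [abs_le]
      constructor
      · linarith [hhi, e3, e4, hGqeq]
      · linarith [hlo, e2, e1, hGqeq]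
    refine tendsto_of_tendsto_of_tendsto_of_le_of_le' tendsto_const_nhds hHt
      (Eventually.of_forall fun γ => Real.iSup_nonneg fun Pim => abs_nonneg _) hupper


end AuxProofs

/-- qualitative robustness, relation (2.10). With
`α̂(γ,Π) = 1 − F_{m−2}(χ_{m−2}(1−α), λ̂²(γ,Π))` one has `α̂(0,Π) = α`, and
`sup_Π |α̂(γ,Π) − α| → 0` as `γ → 0⁺`, the supremum running over all probability
distributions `Π` on `ℝ`. -/
theorem asymptotic_level_qualitative_robustness
    (p : ℕ) (β : Fin (p + 1) → ℝ) (hβ0 : β 0 = -1)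
    (θ₀ : ℝ) (hθ₀ : 0 < θ₀)
    (m : ℕ) (hm : 2 < m)
    (x : ℕ → ℝ) (hx0 : x 0 = 0) (hxmono : ∀ i, i + 1 < m → x i < x (i + 1))
    (α : ℝ) (hα : α ∈ Set.Ioo (0 : ℝ) 1) :
    (∀ (Pim : Measure ℝ), IsProbabilityMeasure Pim →
      1 - noncentralChiSqCDF (m - 2) (chiSqQuantile (m - 2) (1 - α))
          (lambdaHatSq p β θ₀ m x 0 Pim) = α) ∧
    Filter.Tendsto
      (fun γ : ℝ => ⨆ Pim : {μ : Measure ℝ // IsProbabilityMeasure μ},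
        |(1 - noncentralChiSqCDF (m - 2) (chiSqQuantile (m - 2) (1 - α))
            (lambdaHatSq p β θ₀ m x γ (Pim : Measure ℝ))) - α|)
      (nhdsWithin 0 (Set.Ici 0)) (nhds 0) :=
  aux_asymptotic_level_qualitative_robustness p β hβ0 θ₀ hθ₀ m hm x hx0 hxmono α hα
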